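/- Fix constants 0 < m ≤ M and |μ| ≤ M, and let θ ∈ [m, M]. Define f¹(y, θ, μ) = ∫_ℝ exp(−θ(x−μ)²/2) · exp(−exp(x)) · exp(xy) dx for y ∈ ℕ. Then there exists a constant C > 0 depending only on m and M such that for all sufficiently large natural numbers y, f¹(y, θ, μ) ≥ C · exp(y·log(y+1)/2). -/

import Mathlib

open Real MeasureTheory

/-- Unnormalized marginal likelihood of the one-dimensional Poisson log-normal model. -/
noncomputable def f1 (y : ℕ) (θ μ : ℝ) : ℝ :=
  ∫ x : ℝ, Real.exp (-(θ * (x - μ) ^ 2) / 2) * Real.exp (-Real.exp x) * Real.exp (x * y)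

lemma f1_integrand_integrable (y : ℕ) (θ μ : ℝ) (hθ : 0 < θ) :
    Integrable (fun x : ℝ =>
      Real.exp (-(θ * (x - μ) ^ 2) / 2) * Real.exp (-Real.exp x) * Real.exp (x * y)) := by
  set d : ℝ := μ + y / θ with hd
  set k : ℝ := θ * d ^ 2 / 2 - θ * μ ^ 2 / 2 with hk
  have hbase : Integrable (fun x : ℝ => Real.exp (-(θ / 2) * x ^ 2)) :=
    integrable_exp_neg_mul_sq (by linarith)
  have hI : Integrable (fun x : ℝ => Real.exp k * Real.exp (-(θ / 2) * (x - d) ^ 2)) :=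
    (hbase.comp_sub_right d).const_mul _
  refine hI.mono' ?_ ?_
  · exact (Continuous.mul (by continuity) (Real.continuous_exp.comp (by continuity))).aestronglyMeasurable
  · refine Filter.Eventually.of_forall fun x => ?_
    have h1 : Real.exp (-Real.exp x) ≤ 1 := Real.exp_le_one_iff.2 (neg_nonpos.2 (Real.exp_pos x).le)
    have hkey : Real.exp (-(θ * (x - μ) ^ 2) / 2) * Real.exp (x * y)
        = Real.exp k * Real.exp (-(θ / 2) * (x - d) ^ 2) := by
      rw [← Real.exp_add, ← Real.exp_add]
      congr 1
      rw [hk, hd]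
      field_simp
      ring
    have hpos : (0:ℝ) ≤ Real.exp (-(θ * (x - μ) ^ 2) / 2) * Real.exp (-Real.exp x)
        * Real.exp (x * y) := by positivity
    rw [Real.norm_of_nonneg hpos]
    calc Real.exp (-(θ * (x - μ) ^ 2) / 2) * Real.exp (-Real.exp x) * Real.exp (x * y)
        ≤ Real.exp (-(θ * (x - μ) ^ 2) / 2) * 1 * Real.exp (x * y) := by
          apply mul_le_mul_of_nonneg_right _ (Real.exp_nonneg _)
          exact mul_le_mul_of_nonneg_left h1 (Real.exp_nonneg _)
      _ = Real.exp k * Real.exp (-(θ / 2) * (x - d) ^ 2) := by rw [mul_one, hkey]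

/-- One-dimensional dominating-function lemma: for `θ ∈ [m, M]` and `|μ| ≤ M` there is a
constant `C > 0`, depending only on `m` and `M`, such that for all sufficiently large
`y`, `f¹(y, θ, μ) ≥ C · exp(y · log(y+1)/2)`. -/
theorem stmt_7 (m M : ℝ) (hm : 0 < m) (hmM : m ≤ M) :
    ∃ C > (0 : ℝ), ∀ θ μ : ℝ, θ ∈ Set.Icc m M → |μ| ≤ M →
      ∃ N : ℕ, ∀ y : ℕ, N ≤ y →
        C * Real.exp (y * Real.log (y + 1) / 2) ≤ f1 y θ μ := by
  have hM : 0 < M := lt_of_lt_of_le hm hmM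
  refine ⟨1, one_pos, fun θ μ hθ hμ => ?_⟩
  obtain ⟨hmθ, hθM⟩ := hθ
  have hθ0 : 0 < θ := lt_of_lt_of_le hm hmθ
  refine ⟨⌈(M + 10) ^ 8⌉₊, fun y hy => ?_⟩
  -- notation
  set A : ℝ := Real.log (y + 1) with hA
  clear_value A
  have hy0 : (0:ℝ) ≤ (y:ℝ) := Nat.cast_nonneg y
  have hy1 : (1:ℝ) ≤ (y:ℝ) + 1 := by linarith
  have hA0 : 0 ≤ A := by rw [hA]; exact Real.log_nonneg hy1
  set t : ℝ := Real.exp (A / 4) with ht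
  clear_value t
  have ht1 : 1 ≤ t := by rw [ht]; exact Real.one_le_exp (by positivity)
  have ht0 : 0 < t := lt_of_lt_of_le one_pos ht1
  have ht4 : t ^ 4 = (y:ℝ) + 1 := by
    have h1 : t ^ 4 = Real.exp (A/4) * Real.exp (A/4) * Real.exp (A/4) * Real.exp (A/4) := by
      rw [ht]; ring
    rw [h1, ← Real.exp_add, ← Real.exp_add, ← Real.exp_add,
      show A/4 + A/4 + A/4 + A/4 = A by ring, hA, Real.exp_log (by positivity)]
  -- t is large
  have htM : (M + 10) ^ 2 ≤ t := by
    have h1 : ((M + 10) ^ 2) ^ 4 ≤ t ^ 4 := by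
      rw [ht4, ← pow_mul]
      norm_num
      have := Nat.le_ceil ((M + 10) ^ 8)
      have h2 : (⌈(M + 10) ^ 8⌉₊ : ℝ) ≤ (y:ℝ) := by exact_mod_cast hy
      linarith
    exact le_of_pow_le_pow_left₀ (by norm_num) (le_of_lt ht0) h1
  -- log bound : A ≤ 4 * t - 4
  have hAt : A ≤ 4 * t - 4 := by
    have := Real.add_one_le_exp (A / 4)
    rw [← ht] at this
    linarith
  set a : ℝ := A / 2 + 1 with ha
  clear_value a
  have ha1 : 1 ≤ a := by simp [ha]; linarith
  -- e^2 bound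
  have he2 : Real.exp 2 ≤ 9 := by
    have h := Real.exp_one_lt_d9
    have : Real.exp 2 = Real.exp 1 * Real.exp 1 := by rw [← Real.exp_add]; norm_num
    nlinarith [Real.exp_pos 1]
  -- exp(a+1) = t^2 * exp 2
  have hexpa : Real.exp (a + 1) = t ^ 2 * Real.exp 2 := by
    rw [ha, ht, show A / 2 + 1 + 1 = A/4 + (A/4 + 2) by ring, Real.exp_add, Real.exp_add]
    ring
  -- key scalar inequality
  have hkeyineq : M * (a + 1 + M) ^ 2 / 2 + t ^ 2 * Real.exp 2 + y * A / 2 ≤ a * y := by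
    have hay : a * y = y * A / 2 + y := by rw [ha]; ring
    rw [hay]
    have hb1 : a + 1 + M ≤ 2 * t + M := by
      rw [ha]; linarith
    have hb0 : 0 ≤ a + 1 + M := by linarith
    have hsq : (a + 1 + M) ^ 2 ≤ (2 * t + M) ^ 2 := by
      apply pow_le_pow_left₀ hb0 hb1
    have hyt : (y:ℝ) = t ^ 4 - 1 := by linarith [ht4]
    have hMt : M + 10 ≤ t := by
      have h1 : M + 10 ≤ (M + 10) ^ 2 := le_self_pow₀ (by linarith) (by norm_num)
      linarith
    have h10t : (10:ℝ) ≤ t := by linarith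
    have hq1 : (2 * t + M) ^ 2 ≤ 9 * t ^ 2 := by
      have h1 : (2 * t + M) ^ 2 ≤ (3 * t) ^ 2 :=
        pow_le_pow_left₀ (by linarith) (by linarith) 2
      have h2 : (3 * t) ^ 2 = 9 * t ^ 2 := by ring
      linarith
    have hc1 : M * (a + 1 + M) ^ 2 ≤ M * (2 * t + M) ^ 2 :=
      mul_le_mul_of_nonneg_left hsq (le_of_lt hM)
    have hc2 : M * (2 * t + M) ^ 2 ≤ (t - 10) * (9 * t ^ 2) :=
      mul_le_mul (by linarith) hq1 (sq_nonneg _) (by linarith)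
    have hc3 : t ^ 2 * Real.exp 2 ≤ 9 * t ^ 2 := by
      have := mul_le_mul_of_nonneg_left he2 (sq_nonneg t)
      linarith
    have ht3 : 10 * t ^ 3 ≤ t ^ 4 := by
      have h1 := mul_le_mul_of_nonneg_left h10t (pow_nonneg ht0.le 3)
      have h2 : t ^ 3 * t = t ^ 4 := by ring
      linarith
    have ht2 : 10 * t ^ 2 ≤ t ^ 3 := by
      have h1 := mul_le_mul_of_nonneg_left h10t (pow_nonneg ht0.le 2)
      have h2 : t ^ 2 * t = t ^ 3 := by ring
      linarith
    have ht1 : (100:ℝ) ≤ t ^ 2 := by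
      have h1 : (10:ℝ) * 10 ≤ t * t := mul_le_mul h10t h10t (by norm_num) ht0.le
      have h2 : t * t = t ^ 2 := by ring
      linarith
    have hc4 : (t - 10) * (9 * t ^ 2) = 9 * t ^ 3 - 90 * t ^ 2 := by ring
    linarith
  -- the constant lower bound on the interval
  set c₀ : ℝ := Real.exp (-(M * (a + 1 + M) ^ 2) / 2 - t ^ 2 * Real.exp 2 + a * y) with hc₀
  set g : ℝ → ℝ := fun x =>
    Real.exp (-(θ * (x - μ) ^ 2) / 2) * Real.exp (-Real.exp x) * Real.exp (x * y) with hg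
  clear_value g
  have hgint : Integrable g := by rw [hg]; exact f1_integrand_integrable y θ μ hθ0
  have hglb : ∀ x ∈ Set.Icc a (a + 1), c₀ ≤ g x := by
    intro x hx
    obtain ⟨hxl, hxr⟩ := hx
    have hgx : g x = Real.exp (-(θ * (x - μ) ^ 2) / 2 + (-Real.exp x) + x * y) := by
      simp only [hg]
      rw [← Real.exp_add, ← Real.exp_add]
    rw [hgx, hc₀]
    apply Real.exp_le_exp.2
    have hμ' : -M ≤ μ ∧ μ ≤ M := abs_le.1 hμ
    have h1 : θ * (x - μ) ^ 2 / 2 ≤ M * (a + 1 + M) ^ 2 / 2 := by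
      have hxm : |x - μ| ≤ a + 1 + M := by
        rw [abs_le]; constructor <;> [linarith [hμ'.2]; linarith [hμ'.1]]
      have : (x - μ) ^ 2 ≤ (a + 1 + M) ^ 2 := by
        rw [← sq_abs (x - μ)]
        exact pow_le_pow_left₀ (abs_nonneg _) hxm 2
      nlinarith [sq_nonneg (x - μ)]
    have h2 : Real.exp x ≤ t ^ 2 * Real.exp 2 := by
      rw [← hexpa]; exact Real.exp_le_exp.2 hxr
    have h3 : a * y ≤ x * y := by
      apply mul_le_mul_of_nonneg_right hxl (Nat.cast_nonneg y)
    linarith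
  -- integral estimates
  have hvol : (volume (Set.Icc a (a + 1))).toReal = 1 := by
    rw [Real.volume_Icc]; norm_num
  have hstep1 : c₀ ≤ ∫ x in Set.Icc a (a + 1), g x := by
    have h := MeasureTheory.setIntegral_mono_on
      (integrableOn_const measure_Icc_lt_top.ne) hgint.integrableOn measurableSet_Icc hglb
    rwa [MeasureTheory.setIntegral_const, measureReal_def, hvol, smul_eq_mul, one_mul] at h
  have hstep2 : (∫ x in Set.Icc a (a + 1), g x) ≤ ∫ x, g x := by
    apply MeasureTheory.setIntegral_le_integral hgint
    exact Filter.Eventually.of_forall fun x => by simp only [hg]; positivity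
  have hfinal : Real.exp (y * A / 2) ≤ c₀ := by
    rw [hc₀]
    apply Real.exp_le_exp.2
    linarith
  have : Real.exp (y * A / 2) ≤ f1 y θ μ := by
    unfold f1
    calc Real.exp (y * A / 2) ≤ c₀ := hfinal
      _ ≤ ∫ x in Set.Icc a (a + 1), g x := hstep1
      _ ≤ ∫ x, g x := hstep2
      _ = ∫ x : ℝ, Real.exp (-(θ * (x - μ) ^ 2) / 2) * Real.exp (-Real.exp x)
            * Real.exp (x * y) := by rw [hg]
  rw [one_mul]
  exact this
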